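/- For every c > 0 and every even L ∈ ℕ with L ≥ 2, one has W(τ_1^{(L)} ≥ c · r^{−L}) ≥ (1 − r^{L−1})^{⌊c r^{−L}⌋}. -/

import Mathlib

open MeasureTheory ProbabilityTheory

/-- The alternating pattern `(+, −, +, −, …)`: `0` codes `+`, `1` codes `−`, `2` codes `0`. -/
def altPat (j : ℕ) : Fin 3 := if j % 2 = 0 then 0 else 1

/-- The first regeneration time `τ₁^{(L)}`:
the first `n > L` such that `(ε_{n−L}, …, ε_{n−1})` equals the alternating word of length `L`. -/
noncomputable def tau1 (L : ℕ) (ε : ℕ → Fin 3) : ℕ :=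
  sInf {n : ℕ | L < n ∧ ∀ j < L, ε (n - L + j) = altPat j}

namespace TauAux

/-- The event that the alternating word of length `L` occurs ending just before `n`. -/
def matchAt (L n : ℕ) : Set (ℕ → Fin 3) := {ε | ∀ j < L, ε (n - L + j) = altPat j}

/-- The event that there is no occurrence ending before `m` (inclusive). -/
def noMatch (L m : ℕ) : Set (ℕ → Fin 3) :=
  ⋂ n ∈ Finset.Icc (L + 1) m, (matchAt L n)ᶜ

/-- `A` only depends on the coordinates in `S`. -/
def DepOn (A : Set (ℕ → Fin 3)) (S : Finset ℕ) : Prop :=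
  ∀ ⦃ε₁ ε₂ : ℕ → Fin 3⦄, (∀ i ∈ S, ε₁ i = ε₂ i) → ε₁ ∈ A → ε₂ ∈ A

lemma measurableSet_matchAt (L n : ℕ) : MeasurableSet (matchAt L n) := by
  have h : matchAt L n
      = ⋂ (j : ℕ) (_ : j < L), (fun ε : ℕ → Fin 3 => ε (n - L + j)) ⁻¹' {altPat j} := by
    ext ε; simp [matchAt]
  rw [h]
  exact MeasurableSet.iInter fun j => MeasurableSet.iInter fun _ =>
    (measurable_pi_apply _) (measurableSet_singleton _)

lemma measurableSet_noMatch (L m : ℕ) : MeasurableSet (noMatch L m) :=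
  Finset.measurableSet_biInter _ fun n _ => (measurableSet_matchAt L n).compl

lemma depOn_matchAt {L n : ℕ} (hn : L ≤ n) :
    DepOn (matchAt L n) (Finset.Icc (n - L) (n - 1)) := by
  intro ε₁ ε₂ hag h j hj
  rw [← hag _ (by simp only [Finset.mem_Icc]; omega)]
  exact h j hj

lemma DepOn.compl {A : Set (ℕ → Fin 3)} {S : Finset ℕ} (h : DepOn A S) : DepOn Aᶜ S :=
  fun _ _ hag h1 h2 => h1 (h (fun i hi => (hag i hi).symm) h2)

lemma DepOn.mono {A : Set (ℕ → Fin 3)} {S T : Finset ℕ} (hST : S ⊆ T) (h : DepOn A S) :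
    DepOn A T :=
  fun _ _ hag h1 => h (fun i hi => hag i (hST hi)) h1

lemma depOn_noMatch (L m : ℕ) : DepOn (noMatch L m) (Finset.Icc 1 (m - 1)) := by
  intro ε₁ ε₂ hag h
  simp only [noMatch, Set.mem_iInter, Set.mem_compl_iff] at h ⊢
  intro n hn hmem
  refine h n hn ?_
  intro j hj
  simp only [Finset.mem_Icc] at hn
  rw [hag _ (by simp only [Finset.mem_Icc]; omega)]
  exact hmem j hj

lemma noMatch_anti (L : ℕ) {m m' : ℕ} (h : m ≤ m') : noMatch L m' ⊆ noMatch L m := by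
  intro ε hε
  simp only [noMatch, Set.mem_iInter, Set.mem_compl_iff, Finset.mem_Icc] at hε ⊢
  intro n hn
  exact hε n ⟨hn.1, hn.2.trans h⟩

lemma depOn_preimage {A : Set (ℕ → Fin 3)} {S : Finset ℕ} (h : DepOn A S) :
    A = (fun (a : ℕ → Fin 3) (i : S) => a (i : ℕ)) ⁻¹'
      ((fun (a : ℕ → Fin 3) (i : S) => a (i : ℕ)) '' A) := by
  apply Set.Subset.antisymm (Set.subset_preimage_image _ _)
  rintro ε ⟨ε', hε', he⟩
  exact h (fun i hi => congrFun he ⟨i, hi⟩) hε'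

/-- Events depending on disjoint coordinate sets are independent. -/
lemma meas_inter_eq_mul (W : Measure (ℕ → Fin 3))
    (hiid : iIndepFun (fun i (ε : ℕ → Fin 3) => ε i) W)
    (S T : Finset ℕ) (hST : Disjoint S T) {A B : Set (ℕ → Fin 3)}
    (hA : DepOn A S) (hB : DepOn B T) : W (A ∩ B) = W A * W B := by
  have hind := hiid.indepFun_finset S T hST (fun i => measurable_pi_apply i)
  rw [depOn_preimage hA, depOn_preimage hB]
  exact hind.measure_inter_preimage_eq_mul _ _
    (Set.toFinite _).measurableSet (Set.toFinite _).measurableSet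

/-- Measure of a cylinder event. -/
lemma meas_cylinder (W : Measure (ℕ → Fin 3)) (w : Measure (Fin 3))
    (hiid : iIndepFun (fun i (ε : ℕ → Fin 3) => ε i) W)
    (hmarg : ∀ i : ℕ, W.map (fun ε => ε i) = w)
    (S : Finset ℕ) (v : ℕ → Fin 3) :
    W {ε | ∀ i ∈ S, ε i = v i} = ∏ i ∈ S, w {v i} := by
  have key := hiid.measure_inter_preimage_eq_mul (S := S) (sets := fun i => {v i})
    (fun i _ => measurableSet_singleton _)
  have e : {ε : ℕ → Fin 3 | ∀ i ∈ S, ε i = v i}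
      = ⋂ i ∈ S, (fun i (ε : ℕ → Fin 3) => ε i) i ⁻¹' {v i} := by
    ext ε; simp
  rw [e, key]
  refine Finset.prod_congr rfl fun i _ => ?_
  rw [← hmarg i, Measure.map_apply (measurable_pi_apply i) (measurableSet_singleton _)]

lemma w_altPat (w : Measure (Fin 3)) (r : ℝ)
    (hw0 : w {0} = ENNReal.ofReal r) (hw1 : w {1} = ENNReal.ofReal r) (j : ℕ) :
    w {altPat j} = ENNReal.ofReal r := by
  by_cases h : j % 2 = 0 <;> simp [altPat, h, hw0, hw1]

/-- Measure of the occurrence event. -/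
lemma meas_matchAt (W : Measure (ℕ → Fin 3)) (w : Measure (Fin 3)) (r : ℝ)
    (hw0 : w {0} = ENNReal.ofReal r) (hw1 : w {1} = ENNReal.ofReal r)
    (hiid : iIndepFun (fun i (ε : ℕ → Fin 3) => ε i) W)
    (hmarg : ∀ i : ℕ, W.map (fun ε => ε i) = w)
    (L n : ℕ) :
    W (matchAt L n) = (ENNReal.ofReal r) ^ L := by
  have e : matchAt L n = {ε : ℕ → Fin 3 |
      ∀ i ∈ (Finset.range L).image (fun j => n - L + j), ε i = altPat (i - (n - L))} := by
    ext ε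
    simp only [matchAt, Set.mem_setOf_eq, Finset.mem_image, Finset.mem_range]
    constructor
    · rintro h i ⟨j, hj, rfl⟩
      rw [Nat.add_sub_cancel_left]
      exact h j hj
    · intro h j hj
      have := h (n - L + j) ⟨j, hj, rfl⟩
      rwa [Nat.add_sub_cancel_left] at this
  rw [e, meas_cylinder W w hiid hmarg]
  rw [Finset.prod_image (fun a _ b _ h => by omega)]
  rw [Finset.prod_congr rfl (fun j _ => w_altPat w r hw0 hw1 _), Finset.prod_const,
    Finset.card_range]

end TauAux

open TauAux

/-- lower bound on the probability that the regeneration time is large: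
`W(τ₁^{(L)} ≥ c·r^{−L}) ≥ (1 − r^{L−1})^{⌊c·r^{−L}⌋}`. -/
theorem tau_large_probability_lower_bound
    (p : ℝ) (hp : 1 / 2 < p) (hp1 : p < 1)
    (r : ℝ) (hr : r = (1 - p) / 2)
    (w : Measure (Fin 3)) (hwprob : IsProbabilityMeasure w)
    (hw0 : w {0} = ENNReal.ofReal r) (hw1 : w {1} = ENNReal.ofReal r)
    (hw2 : w {2} = ENNReal.ofReal p)
    (W : Measure (ℕ → Fin 3)) (hWprob : IsProbabilityMeasure W)
    (hiid : iIndepFun (fun i (ε : ℕ → Fin 3) => ε i) W)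
    (hmarg : ∀ i : ℕ, W.map (fun ε => ε i) = w)
    (c : ℝ) (hc : 0 < c)
    (L : ℕ) (hL : Even L) (hL2 : 2 ≤ L) :
    ENNReal.ofReal ((1 - r ^ (L - 1)) ^ (⌊c / r ^ L⌋₊))
      ≤ W {ε | c / r ^ L ≤ (tau1 L ε : ℝ)} := by
  classical
  have hr0 : 0 < r := by rw [hr]; linarith
  have hr4 : r < 1 / 4 := by rw [hr]; linarith
  have hr1 : r < 1 := by linarith
  have hρtop : (ENNReal.ofReal r) ≠ ⊤ := ENNReal.ofReal_ne_top
  have hmatch : ∀ n : ℕ, W (matchAt L n) = (ENNReal.ofReal r) ^ L :=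
    fun n => meas_matchAt W w r hw0 hw1 hiid hmarg L n
  have hmul := meas_inter_eq_mul W hiid
  -- basic facts about the real numbers involved
  have hβ0 : 0 ≤ 1 - r ^ (L - 1) := by
    have h1 : r ^ (L - 1) ≤ r ^ 1 := pow_le_pow_of_le_one hr0.le hr1.le (by omega)
    rw [pow_one] at h1; linarith
  have hbern : ∀ K : ℕ, 2 ≤ K → (K : ℝ) * r ^ (K - 1) ≤ 1 - r := by
    intro K hK
    induction K, hK using Nat.le_induction with
    | base => norm_num; linarith
    | succ K hK ih =>
      have hK2 : (2 : ℝ) ≤ (K : ℝ) := by exact_mod_cast hK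
      have e : r ^ K = r * r ^ (K - 1) := by
        conv_lhs => rw [show K = (K - 1) + 1 by omega]
        rw [pow_succ]; ring
      have hp0 : (0 : ℝ) ≤ r ^ (K - 1) := pow_nonneg hr0.le _
      have step : ((K : ℝ) + 1) * r ≤ (K : ℝ) := by nlinarith
      calc ((K + 1 : ℕ) : ℝ) * r ^ (K + 1 - 1)
          = (((K : ℝ) + 1) * r) * r ^ (K - 1) := by
            push_cast
            rw [e]; ring
        _ ≤ (K : ℝ) * r ^ (K - 1) := mul_le_mul_of_nonneg_right step hp0
        _ ≤ 1 - r := ih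
  have hβL : r ≤ (1 - r ^ (L - 1)) ^ L := by
    have h1 : 1 + (L : ℝ) * (-(r ^ (L - 1))) ≤ (1 + -(r ^ (L - 1))) ^ L :=
      one_add_mul_le_pow (by nlinarith [pow_nonneg hr0.le (L - 1)]) L
    rw [mul_neg, ← sub_eq_add_neg, ← sub_eq_add_neg] at h1
    have h2 := hbern L hL2
    linarith
  -- the key recursion for `yv m := (W (noMatch L m)).toReal`
  have hy1 : ∀ m : ℕ, m ≤ L → (W (noMatch L m)).toReal = 1 := by
    intro m hm
    have h : noMatch L m = Set.univ := by
      simp [noMatch, Finset.Icc_eq_empty (by omega : ¬ (L + 1 ≤ m))]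
    simp [h]
  have hy0 : ∀ m : ℕ, 0 ≤ (W (noMatch L m)).toReal := fun m => ENNReal.toReal_nonneg
  have hrec : ∀ m : ℕ, L ≤ m →
      (W (noMatch L m)).toReal - r ^ L * (W (noMatch L (m - L))).toReal
        ≤ (W (noMatch L (m + 1))).toReal := by
    intro m hm
    have hsplit : noMatch L (m + 1) = noMatch L m ∩ (matchAt L (m + 1))ᶜ := by
      unfold noMatch
      rw [show Finset.Icc (L + 1) (m + 1) = insert (m + 1) (Finset.Icc (L + 1) m) by
        ext x; simp only [Finset.mem_insert, Finset.mem_Icc]; omega]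
      rw [Finset.set_biInter_insert]
      exact Set.inter_comm _ _
    have hint : W (noMatch L m ∩ matchAt L (m + 1))
        ≤ W (noMatch L (m - L)) * (ENNReal.ofReal r) ^ L := by
      have hsub : noMatch L m ∩ matchAt L (m + 1)
          ⊆ noMatch L (m - L) ∩ matchAt L (m + 1) :=
        Set.inter_subset_inter_left _ (noMatch_anti L (Nat.sub_le m L))
      refine (measure_mono hsub).trans (le_of_eq ?_)
      rw [hmul (Finset.Icc 1 (m - L - 1)) (Finset.Icc (m + 1 - L) (m + 1 - 1))
        ?_ (depOn_noMatch L (m - L)) (depOn_matchAt (by omega))]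
      · rw [hmatch (m + 1)]
      · rw [Finset.disjoint_left]
        intro i hi1 hi2
        simp only [Finset.mem_Icc] at hi1 hi2
        omega
    have hdecomp : W (noMatch L m ∩ matchAt L (m + 1)) + W (noMatch L (m + 1))
        = W (noMatch L m) := by
      rw [hsplit, ← Set.diff_eq]
      exact measure_inter_add_diff _ (measurableSet_matchAt L (m + 1))
    have h1 := congrArg ENNReal.toReal hdecomp
    rw [ENNReal.toReal_add (measure_ne_top W _) (measure_ne_top W _)] at h1
    have h2 : (W (noMatch L m ∩ matchAt L (m + 1))).toReal
        ≤ r ^ L * (W (noMatch L (m - L))).toReal := by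
      have h3 := ENNReal.toReal_mono
        (ENNReal.mul_ne_top (measure_ne_top W _) (ENNReal.pow_ne_top hρtop)) hint
      rwa [ENNReal.toReal_mul, ENNReal.toReal_pow, ENNReal.toReal_ofReal hr0.le,
        mul_comm] at h3
    linarith
  -- main induction: each extra step costs at least a factor `1 - r^(L-1)`
  have hQ : ∀ m : ℕ, (1 - r ^ (L - 1)) * (W (noMatch L m)).toReal
      ≤ (W (noMatch L (m + 1))).toReal := by
    intro m
    induction m using Nat.strong_induction_on with
    | _ m IH =>
      by_cases hm : m + 1 ≤ L
      · rw [hy1 (m + 1) hm, hy1 m (by omega)]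
        nlinarith [pow_nonneg hr0.le (L - 1)]
      · have hmL : L ≤ m := by omega
        have hchain : ∀ d : ℕ, d ≤ L →
            (1 - r ^ (L - 1)) ^ d * (W (noMatch L (m - d))).toReal
              ≤ (W (noMatch L m)).toReal := by
          intro d
          induction d with
          | zero => intro _; simpa using le_refl ((W (noMatch L m)).toReal)
          | succ d ihd =>
            intro hd
            have h1 := ihd (by omega)
            have h2 := IH (m - d - 1) (by omega)
            rw [show m - d - 1 + 1 = m - d by omega] at h2
            calc (1 - r ^ (L - 1)) ^ (d + 1) * (W (noMatch L (m - (d + 1)))).toReal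
                = (1 - r ^ (L - 1)) ^ d
                    * ((1 - r ^ (L - 1)) * (W (noMatch L (m - d - 1))).toReal) := by
                  rw [show m - (d + 1) = m - d - 1 by omega]; ring
              _ ≤ (1 - r ^ (L - 1)) ^ d * (W (noMatch L (m - d))).toReal :=
                  mul_le_mul_of_nonneg_left h2 (pow_nonneg hβ0 d)
              _ ≤ (W (noMatch L m)).toReal := h1
        have hLm := hchain L le_rfl
        have hr5 := hrec m hmL
        have h6 : r * (W (noMatch L (m - L))).toReal ≤ (W (noMatch L m)).toReal :=
          le_trans (mul_le_mul_of_nonneg_right hβL (hy0 (m - L))) hLm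
        have hrLsplit : r ^ L = r ^ (L - 1) * r := by
          conv_lhs => rw [show L = (L - 1) + 1 by omega]
          rw [pow_succ]
        have h7 : r ^ L * (W (noMatch L (m - L))).toReal
            ≤ r ^ (L - 1) * (W (noMatch L m)).toReal := by
          rw [hrLsplit, mul_assoc]
          exact mul_le_mul_of_nonneg_left h6 (pow_nonneg hr0.le _)
        linarith
  have hyβ : ∀ k : ℕ, (1 - r ^ (L - 1)) ^ k ≤ (W (noMatch L (L + k))).toReal := by
    intro k
    induction k with
    | zero => simp [hy1 L le_rfl]
    | succ k ih =>
      calc (1 - r ^ (L - 1)) ^ (k + 1) = (1 - r ^ (L - 1)) * (1 - r ^ (L - 1)) ^ k := by ring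
        _ ≤ (1 - r ^ (L - 1)) * (W (noMatch L (L + k))).toReal :=
            mul_le_mul_of_nonneg_left ih hβ0
        _ ≤ (W (noMatch L (L + k + 1))).toReal := hQ (L + k)
  -- almost surely, some occurrence happens
  have hNEc : W {ε : ℕ → Fin 3 | ∃ n, L < n ∧ ∀ j < L, ε (n - L + j) = altPat j}ᶜ = 0 := by
    have hBval : ∀ K : ℕ,
        W (⋂ k ∈ Finset.range K, (matchAt L ((k + 1) * L + 1))ᶜ)
          = (1 - (ENNReal.ofReal r) ^ L) ^ K := by
      intro K
      induction K with
      | zero => simp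
      | succ K ih =>
        have hsplit : (⋂ k ∈ Finset.range (K + 1), (matchAt L ((k + 1) * L + 1))ᶜ)
            = (⋂ k ∈ Finset.range K, (matchAt L ((k + 1) * L + 1))ᶜ)
              ∩ (matchAt L ((K + 1) * L + 1))ᶜ := by
          ext ε
          simp only [Set.mem_inter_iff, Set.mem_iInter, Finset.mem_range, Set.mem_compl_iff]
          constructor
          · intro h
            exact ⟨fun k hk => h k (by omega), h K (by omega)⟩
          · rintro ⟨h1, h2⟩ k hk
            rcases Nat.lt_succ_iff_lt_or_eq.mp hk with h | rfl
            · exact h1 k h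
            · exact h2
        have hBdep : DepOn (⋂ k ∈ Finset.range K, (matchAt L ((k + 1) * L + 1))ᶜ)
            (Finset.Icc 1 (K * L)) := by
          intro ε₁ ε₂ hag h
          simp only [Set.mem_iInter, Set.mem_compl_iff, Finset.mem_range] at h ⊢
          intro k hk hmem
          refine h k hk ?_
          intro j hj
          rw [hag _ ?_]
          · exact hmem j hj
          · simp only [Finset.mem_Icc]
            have e1 : (k + 1) * L = k * L + L := by ring
            have e2 : (k + 1) * L ≤ K * L := Nat.mul_le_mul_right L (by omega)
            omega
        have hTdep : DepOn (matchAt L ((K + 1) * L + 1))ᶜ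
            (Finset.Icc (K * L + 1) ((K + 1) * L)) := by
          have h0 : (K + 1) * L = K * L + L := by ring
          have h := (depOn_matchAt (L := L) (n := (K + 1) * L + 1) (by omega)).compl
          have e : Finset.Icc ((K + 1) * L + 1 - L) ((K + 1) * L + 1 - 1)
              = Finset.Icc (K * L + 1) ((K + 1) * L) := by
            have h0 : (K + 1) * L = K * L + L := by ring
            congr 1 <;> omega
          rwa [e] at h
        rw [hsplit, hmul (Finset.Icc 1 (K * L)) (Finset.Icc (K * L + 1) ((K + 1) * L))
          ?_ hBdep hTdep]
        · rw [ih, prob_compl_eq_one_sub (measurableSet_matchAt L _), hmatch, pow_succ]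
        · rw [Finset.disjoint_left]
          intro i hi1 hi2
          simp only [Finset.mem_Icc] at hi1 hi2
          omega
    have hle : ∀ K : ℕ,
        W {ε : ℕ → Fin 3 | ∃ n, L < n ∧ ∀ j < L, ε (n - L + j) = altPat j}ᶜ
          ≤ (1 - (ENNReal.ofReal r) ^ L) ^ K := by
      intro K
      refine (measure_mono ?_).trans (le_of_eq (hBval K))
      intro ε hε
      simp only [Set.mem_compl_iff, Set.mem_setOf_eq, not_exists, not_and] at hε
      simp only [Set.mem_iInter, Set.mem_compl_iff, Finset.mem_range]
      intro k _
      have h0 : (k + 1) * L = k * L + L := by ring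
      exact hε ((k + 1) * L + 1) (by omega)
    have hlt : (1 - (ENNReal.ofReal r) ^ L) < 1 := by
      refine ENNReal.sub_lt_self ENNReal.one_ne_top one_ne_zero ?_
      exact pow_ne_zero L (ne_of_gt (ENNReal.ofReal_pos.2 hr0))
    have htends := ENNReal.tendsto_pow_atTop_nhds_zero_of_lt_one hlt
    have hge := ge_of_tendsto' htends (fun K => hle K)
    exact le_antisymm hge (zero_le (a := _))
  -- assembling the final bound
  set N := ⌊c / r ^ L⌋₊ with hN
  have hsub : noMatch L (L + N)
        ∩ {ε : ℕ → Fin 3 | ∃ n, L < n ∧ ∀ j < L, ε (n - L + j) = altPat j}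
      ⊆ {ε : ℕ → Fin 3 | c / r ^ L ≤ (tau1 L ε : ℝ)} := by
    rintro ε ⟨h1, h2⟩
    have hne : {n : ℕ | L < n ∧ ∀ j < L, ε (n - L + j) = altPat j}.Nonempty := h2
    have hmem : L < tau1 L ε ∧ ∀ j < L, ε (tau1 L ε - L + j) = altPat j :=
      Nat.sInf_mem hne
    have hbig : L + N < tau1 L ε := by
      by_contra hcon
      push_neg at hcon
      simp only [noMatch, Set.mem_iInter, Set.mem_compl_iff, Finset.mem_Icc] at h1
      exact h1 (tau1 L ε) ⟨by omega, hcon⟩ hmem.2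
    have h3 : c / r ^ L < (N : ℝ) + 1 := Nat.lt_floor_add_one _
    have h4 : (N : ℝ) + 1 ≤ (tau1 L ε : ℝ) := by exact_mod_cast (by omega : N + 1 ≤ tau1 L ε)
    simp only [Set.mem_setOf_eq]
    linarith
  have hzero : W (noMatch L (L + N))
      ≤ W (noMatch L (L + N)
        ∩ {ε : ℕ → Fin 3 | ∃ n, L < n ∧ ∀ j < L, ε (n - L + j) = altPat j}) := by
    calc W (noMatch L (L + N))
        ≤ W ((noMatch L (L + N)
            ∩ {ε : ℕ → Fin 3 | ∃ n, L < n ∧ ∀ j < L, ε (n - L + j) = altPat j})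
          ∪ {ε : ℕ → Fin 3 | ∃ n, L < n ∧ ∀ j < L, ε (n - L + j) = altPat j}ᶜ) := by
          refine measure_mono fun ε hε => ?_
          by_cases h : ε ∈ {ε : ℕ → Fin 3 | ∃ n, L < n ∧ ∀ j < L, ε (n - L + j) = altPat j}
          · exact Or.inl ⟨hε, h⟩
          · exact Or.inr h
      _ ≤ W (noMatch L (L + N)
            ∩ {ε : ℕ → Fin 3 | ∃ n, L < n ∧ ∀ j < L, ε (n - L + j) = altPat j})
          + W {ε : ℕ → Fin 3 | ∃ n, L < n ∧ ∀ j < L, ε (n - L + j) = altPat j}ᶜ :=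
          measure_union_le _ _
      _ = _ := by rw [hNEc, add_zero]
  have hfinal : ENNReal.ofReal ((1 - r ^ (L - 1)) ^ N) ≤ W (noMatch L (L + N)) := by
    calc ENNReal.ofReal ((1 - r ^ (L - 1)) ^ N)
        ≤ ENNReal.ofReal ((W (noMatch L (L + N))).toReal) :=
          ENNReal.ofReal_le_ofReal (hyβ N)
      _ = W (noMatch L (L + N)) := ENNReal.ofReal_toReal (measure_ne_top W _)
  exact hfinal.trans (hzero.trans (measure_mono hsub))
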